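/- Let δ > 0 be a real number and let 0 ≤ j ≤ n be integers. Set k = (2(δ+2)^{n-j} + 2δ)/(δ+1), the degree of vertices created at iteration j, and let N_m = (6(δ+4)^m + 3δ + 3)/(δ+3). Then the cumulative degree distribution P_cum(k) = N_j / N_n satisfies P_cum(k) = (6(δ+4)^n · ((δ+1)k/2 − δ)^{-ln(δ+4)/ln(δ+2)} + 3δ + 3) / (6(δ+4)^n + 3δ + 3). -/

import Mathlib

/-- Cumulative degree distribution of the weighted network follows a power law. -/
theorem stmt4 (δ : ℝ) (hδ : 0 < δ) (j n : ℕ) (hjn : j ≤ n)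
    (k : ℝ) (hk : k = (2 * (δ + 2) ^ (n - j) + 2 * δ) / (δ + 1))
    (N : ℕ → ℝ) (hN : ∀ m : ℕ, N m = (6 * (δ + 4) ^ m + 3 * δ + 3) / (δ + 3)) :
    N j / N n =
      (6 * (δ + 4) ^ n * ((δ + 1) * k / 2 - δ) ^ (-(Real.log (δ + 4) / Real.log (δ + 2))) +
          3 * δ + 3) /
        (6 * (δ + 4) ^ n + 3 * δ + 3) := by
  have h1 : (0:ℝ) < δ + 1 := by linarith
  have h2 : (0:ℝ) < δ + 2 := by linarith
  have h4 : (0:ℝ) < δ + 4 := by linarith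
  have hlog2 : Real.log (δ + 2) ≠ 0 :=
    ne_of_gt (Real.log_pos (by linarith))
  have hbase : (δ + 1) * k / 2 - δ = (δ + 2) ^ (n - j) := by
    rw [hk]; field_simp; ring
  have hpow : ((δ + 2) ^ (n - j) : ℝ) ^ (-(Real.log (δ + 4) / Real.log (δ + 2)))
      = (δ + 4) ^ (-((n - j : ℕ) : ℝ)) := by
    rw [← Real.rpow_natCast (δ + 2) (n - j), ← Real.rpow_mul h2.le]
    rw [Real.rpow_def_of_pos h2, Real.rpow_def_of_pos h4]
    congr 1
    field_simp
  have hsplit : (δ + 4) ^ n = (δ + 4) ^ j * (δ + 4) ^ (n - j) := by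
    rw [← pow_add]; congr 1; omega
  have hmain : 6 * (δ + 4) ^ n * ((δ + 1) * k / 2 - δ) ^
      (-(Real.log (δ + 4) / Real.log (δ + 2))) = 6 * (δ + 4) ^ j := by
    rw [hbase, hpow, Real.rpow_neg h4.le, Real.rpow_natCast, hsplit]
    have hne : ((δ + 4) ^ (n - j) : ℝ) ≠ 0 := by positivity
    field_simp
  rw [hmain, hN j, hN n]
  have h3 : (δ + 3) ≠ 0 := by positivity
  have hd : (6 * (δ + 4) ^ n + 3 * δ + 3) ≠ 0 := by positivity
  field_simp
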